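/- arXiv:1508.03066 — 7 statements merged into one kernel-verified Lean document; each statement's English description precedes it below -/
import Mathlib

section
/- Let X be a separable Fréchet space and let T : X → X be a continuous linear operator. Suppose there exist dense subsets Z and Y of X and a map S : Y → Y satisfying: (a) Tⁿ(z) → 0 as n → ∞ for every z ∈ Z; (b) Sⁿ(y) → 0 as n → ∞ for every y ∈ Y; (c) T(S(y)) = y for every y ∈ Y. Then T is mixing. -/
open Filter Topology

/-- **Hypercyclicity criterion (Kitai, Gethner–Shapiro, Costakis–Sambarino).**
Let `X` be a separable Fréchet space (complete metrizable locally convex topological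
vector space over `ℂ`) and `T : X → X` a continuous linear operator. If there are dense
subsets `Z, Y ⊆ X` and a map `S : Y → Y` such that `Tⁿ z → 0` for all `z ∈ Z`,
`Sⁿ y → 0` for all `y ∈ Y`, and `T (S y) = y` for all `y ∈ Y`, then `T` is mixing. -/
theorem stmt0 {X : Type*} [AddCommGroup X] [Module ℂ X] [UniformSpace X] [IsUniformAddGroup X]
    [ContinuousSMul ℂ X] [CompleteSpace X] [TopologicalSpace.MetrizableSpace X]
    [TopologicalSpace.SeparableSpace X]
    [Module ℝ X] [IsScalarTower ℝ ℂ X] [LocallyConvexSpace ℝ X]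
    (T : X →L[ℂ] X) (Z Y : Set X) (hZ : Dense Z) (hY : Dense Y)
    (S : Y → Y)
    (ha : ∀ z ∈ Z, Tendsto (fun n : ℕ => (⇑T)^[n] z) atTop (𝓝 0))
    (hb : ∀ y : Y, Tendsto (fun n : ℕ => ((S^[n] y : Y) : X)) atTop (𝓝 0))
    (hc : ∀ y : Y, T ((S y : Y) : X) = (y : X)) :
    ∀ U V : Set X, IsOpen U → IsOpen V → U.Nonempty → V.Nonempty →
      ∃ n₀ : ℕ, ∀ n ≥ n₀, ((⇑T)^[n] '' U ∩ V).Nonempty := by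

  intro U V hU hV hUne hVne
  obtain ⟨z, hzU, hzZ⟩ := hZ.inter_open_nonempty U hU hUne
  obtain ⟨v, hvV, hvY⟩ := hY.inter_open_nonempty V hV hVne
  set y : Y := ⟨v, hvY⟩ with hy
  have key : ∀ n : ℕ, (⇑T)^[n] ((S^[n] y : Y) : X) = v := by
    intro n
    induction n with
    | zero => simp [hy]
    | succ n ih =>
      rw [Function.iterate_succ_apply' S n y, Function.iterate_succ_apply, hc, ih]
  have hadd : ∀ (n : ℕ) (a b : X), (⇑T)^[n] (a + b) = (⇑T)^[n] a + (⇑T)^[n] b := by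
    intro n
    induction n with
    | zero => intro a b; simp
    | succ n ih =>
      intro a b
      rw [Function.iterate_succ_apply, Function.iterate_succ_apply,
        Function.iterate_succ_apply, map_add, ih]
  have h1 : Tendsto (fun n : ℕ => z + ((S^[n] y : Y) : X)) atTop (𝓝 z) := by
    simpa using tendsto_const_nhds.add (hb y)
  have h2 : Tendsto (fun n : ℕ => (⇑T)^[n] (z + ((S^[n] y : Y) : X))) atTop (𝓝 v) := by
    have heq : (fun n : ℕ => (⇑T)^[n] (z + ((S^[n] y : Y) : X)))
        = fun n : ℕ => (⇑T)^[n] z + v := by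
      funext n; rw [hadd, key]
    rw [heq]
    simpa using (ha z hzZ).add (tendsto_const_nhds : Tendsto (fun _ : ℕ => v) atTop (𝓝 v))
  have hU' := h1.eventually (hU.mem_nhds hzU)
  have hV' := h2.eventually (hV.mem_nhds hvV)
  obtain ⟨n₀, hn₀⟩ := eventually_atTop.mp (hU'.and hV')
  refine ⟨n₀, fun n hn => ?_⟩
  obtain ⟨hx, hTx⟩ := hn₀ n hn
  exact ⟨(⇑T)^[n] (z + ((S^[n] y : Y) : X)), ⟨_, hx, rfl⟩, hTx⟩
end

section
/- Let X be a separable Fréchet space and let T : X → X be a continuous linear operator. Then T is mixing if and only if T is hereditarily hypercyclic, i.e., for every strictly increasing sequence (n_j) of natural numbers there exists x ∈ X such that the sequence (T^{n_j}(x))_j is dense in X. -/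
open Filter Topology

/-- On a separable Fréchet space over `ℂ`, a continuous linear operator is mixing if and
only if it is hereditarily hypercyclic: for every strictly increasing sequence `(n_j)` of
natural numbers there is a vector `x` such that `(T^[n_j] x)_j` is dense. -/
theorem stmt1 {X : Type*} [AddCommGroup X] [Module ℂ X] [UniformSpace X] [IsUniformAddGroup X]
    [ContinuousSMul ℂ X] [CompleteSpace X] [TopologicalSpace.MetrizableSpace X]
    [TopologicalSpace.SeparableSpace X]
    [Module ℝ X] [IsScalarTower ℝ ℂ X] [LocallyConvexSpace ℝ X]
    (T : X →L[ℂ] X) :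
    (∀ U V : Set X, IsOpen U → IsOpen V → U.Nonempty → V.Nonempty →
      ∃ n₀ : ℕ, ∀ n ≥ n₀, ((⇑T)^[n] '' U ∩ V).Nonempty) ↔
    (∀ m : ℕ → ℕ, StrictMono m →
      ∃ x : X, Dense (Set.range fun j : ℕ => (⇑T)^[m j] x)) := by
  have hTc : ∀ k : ℕ, Continuous ((⇑T)^[k]) := fun k => T.continuous.iterate k
  constructor
  · -- mixing → hereditarily hypercyclic
    intro hmix m hm
    haveI : (uniformity X).IsCountablyGenerated := by
      rw [uniformity_eq_comap_nhds_zero X]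
      infer_instance
    haveI : SecondCountableTopology X :=
      UniformSpace.secondCountable_of_separable X
    obtain ⟨b, hbc, hbne, hb⟩ := TopologicalSpace.exists_countable_basis X
    haveI : Countable b := hbc.to_subtype
    set G : b → Set X := fun o => ⋃ j : ℕ, (⇑T)^[m j] ⁻¹' (o : Set X) with hG
    have hGo : ∀ o : b, IsOpen (G o) := fun o =>
      isOpen_iUnion fun j => (hb.isOpen o.2).preimage (hTc (m j))
    have hGd : ∀ o : b, Dense (G o) := by
      intro o
      rw [dense_iff_inter_open]
      intro U hU hUne
      have hone : (o : Set X).Nonempty :=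
        Set.nonempty_iff_ne_empty.2 fun h => hbne (h ▸ o.2)
      obtain ⟨n₀, hn₀⟩ := hmix U o hU (hb.isOpen o.2) hUne hone
      obtain ⟨y, ⟨u, hu, huy⟩, hyo⟩ := hn₀ (m n₀) hm.le_apply
      exact ⟨u, hu, Set.mem_iUnion.2 ⟨n₀, by rw [Set.mem_preimage, huy]; exact hyo⟩⟩
    obtain ⟨x, hx⟩ := (dense_iInter_of_isOpen hGo hGd).nonempty
    refine ⟨x, hb.dense_iff.2 fun o ho hone => ?_⟩
    obtain ⟨j, hj⟩ := Set.mem_iUnion.1 (Set.mem_iInter.1 hx ⟨o, ho⟩)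
    exact ⟨(⇑T)^[m j] x, hj, Set.mem_range_self j⟩
  · -- hereditarily hypercyclic → mixing
    intro hyp U V hU hV hUne hVne
    by_contra hcon
    push_neg at hcon
    -- the set of "bad" times is infinite
    set S : Set ℕ := {n | (⇑T)^[n] '' U ∩ V = ∅} with hS
    have hSinf : S.Infinite := by
      refine Set.infinite_of_forall_exists_gt fun a => ?_
      obtain ⟨n, hn, hns⟩ := hcon (a + 1)
      exact ⟨n, hns, Nat.lt_of_succ_le hn⟩
    set m : ℕ → ℕ := Nat.nth (· ∈ S) with hm
    have hmmono : StrictMono m := Nat.nth_strictMono hSinf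
    have hmmem : ∀ j, m j ∈ S := fun j => Nat.nth_mem_of_infinite hSinf j
    -- every iterate of T has dense range
    have hdr : ∀ k : ℕ, DenseRange ((⇑T)^[k]) := by
      intro k
      obtain ⟨z, hz⟩ := hyp (fun j => j + k) (fun i j h => Nat.add_lt_add_right h k)
      refine hz.mono (Set.range_subset_iff.2 fun j => ?_)
      rw [Nat.add_comm, Function.iterate_add_apply]
      exact Set.mem_range_self _
    -- get a hypercyclic vector along the bad sequence
    obtain ⟨x, hx⟩ := hyp m hmmono
    -- the full orbit of x is dense, so some iterate lands in U
    have horb : Dense (Set.range fun k : ℕ => (⇑T)^[k] x) :=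
      hx.mono (Set.range_subset_iff.2 fun j => Set.mem_range_self (m j))
    obtain ⟨y, hkU, k, rfl⟩ := horb.inter_open_nonempty U hU hUne
    -- push the dense sequence forward by T^[k]
    have himg : Dense ((⇑T)^[k] '' Set.range fun j : ℕ => (⇑T)^[m j] x) :=
      (hdr k).dense_image (hTc k) hx
    obtain ⟨w, hyV, ⟨_, ⟨j, rfl⟩, rfl⟩⟩ := himg.inter_open_nonempty V hV hVne
    refine Set.eq_empty_iff_forall_notMem.1 (hmmem j) ((⇑T)^[k] ((⇑T)^[m j] x))
      ⟨⟨(⇑T)^[k] x, hkU, ?_⟩, hyV⟩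
    rw [← Function.iterate_add_apply, ← Function.iterate_add_apply, Nat.add_comm]
end

section
/- Let X be a separable Fréchet space over ℂ and let T : X → X be a continuous linear operator. Suppose that the linear span of { x ∈ X : T(x) = λx for some λ ∈ ℂ with |λ| < 1 } is dense in X and the linear span of { x ∈ X : T(x) = λx for some λ ∈ ℂ with |λ| > 1 } is dense in X. Then T is mixing, in particular hypercyclic. -/
open Filter Topology

/-- **Godefroy–Shapiro type criterion.** Let `X` be a separable Fréchet space over `ℂ`
and `T : X → X` a continuous linear operator. If the span of the eigenvectors of `T`
corresponding to eigenvalues of modulus `< 1` is dense, and likewise for eigenvalues of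
modulus `> 1`, then `T` is mixing, in particular hypercyclic. -/
theorem stmt3 {X : Type*} [AddCommGroup X] [Module ℂ X] [UniformSpace X] [IsUniformAddGroup X]
    [ContinuousSMul ℂ X] [CompleteSpace X] [TopologicalSpace.MetrizableSpace X]
    [TopologicalSpace.SeparableSpace X]
    [Module ℝ X] [IsScalarTower ℝ ℂ X] [LocallyConvexSpace ℝ X]
    (T : X →L[ℂ] X)
    (h1 : Dense (Submodule.span ℂ {x : X | ∃ c : ℂ, ‖c‖ < 1 ∧ T x = c • x} : Set X))
    (h2 : Dense (Submodule.span ℂ {x : X | ∃ c : ℂ, 1 < ‖c‖ ∧ T x = c • x} : Set X)) :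
    (∀ U V : Set X, IsOpen U → IsOpen V → U.Nonempty → V.Nonempty →
      ∃ n₀ : ℕ, ∀ n ≥ n₀, ((⇑T)^[n] '' U ∩ V).Nonempty) ∧
    ∃ x : X, Dense (Set.range fun n : ℕ => (⇑T)^[n] x) := by
  haveI : (uniformity X).IsCountablyGenerated := IsUniformAddGroup.uniformity_countably_generated
  haveI : SecondCountableTopology X :=
    UniformSpace.secondCountable_of_separable X
  have hpow : ∀ (n : ℕ) (x : X), (⇑T)^[n] x = (T ^ n) x := fun n x =>
    (congrFun (FunLike.coe_pow_eq_iterate T n) x).symm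
  -- Lemma A : forward orbits of small eigenvector combinations tend to 0
  have hA : ∀ u ∈ Submodule.span ℂ {x : X | ∃ c : ℂ, ‖c‖ < 1 ∧ T x = c • x},
      Tendsto (fun n : ℕ => (⇑T)^[n] u) atTop (𝓝 0) := by
    intro u hu
    induction hu using Submodule.span_induction with
    | mem x hx =>
      obtain ⟨c, hc, hTx⟩ := hx
      have hiter : ∀ n : ℕ, (⇑T)^[n] x = c ^ n • x := by
        intro n
        induction n with
        | zero => simp
        | succ n ih =>
          rw [Function.iterate_succ_apply', ih, map_smul, hTx, smul_smul, pow_succ]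
      simp only [hiter]
      have hc0 : Tendsto (fun n : ℕ => c ^ n) atTop (𝓝 0) :=
        tendsto_pow_atTop_nhds_zero_of_norm_lt_one hc
      simpa using hc0.smul_const x
    | zero => simp only [Function.iterate_fixed (map_zero T)]; exact tendsto_const_nhds
    | add x y hx hy ihx ihy =>
      have h := ihx.add ihy
      simp only [hpow, map_add] at *
      simpa using h
    | smul a x hx ihx =>
      have h := ihx.const_smul a
      simp only [hpow, map_smul] at *
      simpa using h
  -- Lemma B : backward "orbits" for large eigenvector combinations
  have hB : ∀ v ∈ Submodule.span ℂ {x : X | ∃ c : ℂ, 1 < ‖c‖ ∧ T x = c • x},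
      ∃ w : ℕ → X, Tendsto w atTop (𝓝 0) ∧ ∀ n, (⇑T)^[n] (w n) = v := by
    intro v hv
    induction hv using Submodule.span_induction with
    | mem x hx =>
      obtain ⟨c, hc, hTx⟩ := hx
      have hcne : c ≠ 0 := by
        intro h; rw [h, norm_zero] at hc; linarith
      have hinv : ‖c⁻¹‖ < 1 := by
        rw [norm_inv]
        exact inv_lt_one_of_one_lt₀ hc
      refine ⟨fun n => (c⁻¹) ^ n • x, ?_, ?_⟩
      · simpa using (tendsto_pow_atTop_nhds_zero_of_norm_lt_one hinv).smul_const x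
      · intro n
        have hiter : ∀ m : ℕ, (⇑T)^[m] x = c ^ m • x := by
          intro m
          induction m with
          | zero => simp
          | succ m ih =>
            rw [Function.iterate_succ_apply', ih, map_smul, hTx, smul_smul, pow_succ]
        rw [hpow, map_smul, ← hpow, hiter, smul_smul, ← mul_pow, inv_mul_cancel₀ hcne,
          one_pow, one_smul]
    | zero => exact ⟨fun _ => 0, tendsto_const_nhds, fun n => by rw [hpow, map_zero]⟩
    | add x y hx hy ihx ihy =>
      obtain ⟨w, hw0, hwT⟩ := ihx
      obtain ⟨w', hw0', hwT'⟩ := ihy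
      refine ⟨fun n => w n + w' n, by simpa using hw0.add hw0', fun n => ?_⟩
      rw [hpow, map_add, ← hpow, ← hpow, hwT, hwT']
    | smul a x hx ihx =>
      obtain ⟨w, hw0, hwT⟩ := ihx
      refine ⟨fun n => a • w n, by simpa using hw0.const_smul a, fun n => ?_⟩
      rw [hpow, map_smul, ← hpow, hwT]
  -- Mixing
  have hmix : ∀ U V : Set X, IsOpen U → IsOpen V → U.Nonempty → V.Nonempty →
      ∃ n₀ : ℕ, ∀ n ≥ n₀, ((⇑T)^[n] '' U ∩ V).Nonempty := by
    intro U V hU hV hUne hVne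
    obtain ⟨u, huspan, huU⟩ := h1.exists_mem_open hU hUne
    obtain ⟨v, hvspan, hvV⟩ := h2.exists_mem_open hV hVne
    obtain ⟨w, hw0, hwT⟩ := hB v hvspan
    have hz : Tendsto (fun n : ℕ => u + w n) atTop (𝓝 u) := by
      simpa using (tendsto_const_nhds : Tendsto (fun _ : ℕ => u) atTop _).add hw0
    have hU' : ∀ᶠ n in atTop, u + w n ∈ U := hz (hU.mem_nhds huU)
    have hTz : Tendsto (fun n : ℕ => (⇑T)^[n] (u + w n)) atTop (𝓝 v) := by
      have heq : ∀ n : ℕ, (⇑T)^[n] (u + w n) = (⇑T)^[n] u + v := by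
        intro n; rw [hpow, map_add, ← hpow, ← hpow, hwT]
      simp only [heq]
      simpa using (hA u huspan).add (tendsto_const_nhds : Tendsto (fun _ : ℕ => v) atTop _)
    have hV' : ∀ᶠ n in atTop, (⇑T)^[n] (u + w n) ∈ V := hTz (hV.mem_nhds hvV)
    obtain ⟨n₀, hn₀⟩ := eventually_atTop.mp (hU'.and hV')
    exact ⟨n₀, fun n hn =>
      ⟨(⇑T)^[n] (u + w n), ⟨u + w n, (hn₀ n hn).1, rfl⟩, (hn₀ n hn).2⟩⟩
  refine ⟨hmix, ?_⟩
  -- Hypercyclicity via Baire category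
  obtain ⟨b, hbc, hbne, hb⟩ := TopologicalSpace.exists_countable_basis X
  have hdense : ∀ s ∈ b, Dense (⋃ n : ℕ, (⇑T)^[n] ⁻¹' s) := by
    intro s hs
    rw [dense_iff_inter_open]
    intro W hW hWne
    have hsne : s.Nonempty := Set.nonempty_iff_ne_empty.2 (fun h => hbne (h ▸ hs))
    obtain ⟨n₀, hn⟩ := hmix W s hW (hb.isOpen hs) hWne hsne
    obtain ⟨y, ⟨x, hxW, rfl⟩, hys⟩ := hn n₀ le_rfl
    exact ⟨x, hxW, Set.mem_iUnion.2 ⟨n₀, hys⟩⟩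
  have hres : Dense (⋂ s ∈ b, ⋃ n : ℕ, (⇑T)^[n] ⁻¹' s) :=
    dense_biInter_of_isOpen
      (fun s hs => isOpen_iUnion fun n => (hb.isOpen hs).preimage (T.continuous.iterate n))
      hbc hdense
  haveI : Nonempty X := ⟨0⟩
  obtain ⟨x, hx⟩ := hres.nonempty
  refine ⟨x, dense_iff_inter_open.2 fun W hW hWne => ?_⟩
  obtain ⟨y, hyW⟩ := hWne
  obtain ⟨s, hsb, hys, hsW⟩ := hb.exists_subset_of_mem_open hyW hW
  obtain ⟨n, hn⟩ := Set.mem_iUnion.1 (Set.mem_iInter₂.1 hx s hsb)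
  exact ⟨(⇑T)^[n] x, hsW hn, ⟨n, rfl⟩⟩
end

section
/- Let E and F be complex normed spaces, let G be a complex Banach space, let M : E^m → G be a continuous symmetric m-multilinear map, and let T : F → E be an approximable operator, i.e., T lies in the operator-norm closure of the continuous finite-rank operators from F to E. Then the m-homogeneous polynomial y ↦ M(Ty, …, Ty) is approximable: for every ε > 0 there exists a function g in the linear span of { y ↦ (ψ(y))^m · b : ψ a continuous linear functional on F, b ∈ G } such that ‖M(Ty, …, Ty) − g(y)‖ ≤ ε for all y ∈ F with ‖y‖ ≤ 1. -/
open Finset in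
lemma polar_sup (m : ℕ) (R : Finset (Fin m)) :
    (∑ S : Finset (Fin m), if R ⊆ S then (-1 : ℂ) ^ (m - S.card) else 0)
      = if R = Finset.univ then 1 else 0 := by
  rw [← Finset.sum_filter]
  have key : ∑ S ∈ Finset.univ.filter (fun S => R ⊆ S), (-1 : ℂ) ^ (m - S.card)
      = ∑ T ∈ Rᶜ.powerset, (-1 : ℂ) ^ (Rᶜ.card - T.card) := by
    refine Finset.sum_nbij' (fun S => S \ R) (fun T => R ∪ T) ?_ ?_ ?_ ?_ ?_
    · intro S hS
      simp only [Finset.mem_powerset]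
      intro x hx
      simp only [Finset.mem_sdiff] at hx
      simp [Finset.mem_compl, hx.2]
    · intro T hT
      simp
    · intro S hS
      simp only [Finset.mem_filter] at hS
      exact Finset.union_sdiff_of_subset hS.2
    · intro T hT
      simp only [Finset.mem_powerset] at hT
      apply Finset.union_sdiff_cancel_left
      rw [Finset.disjoint_left]
      intro x hx1 hx2
      exact (Finset.mem_compl.1 (hT hx2)) hx1
    · intro S hS
      simp only [Finset.mem_filter] at hS
      congr 1
      show m - S.card = Rᶜ.card - (S \ R).card
      have h1 : (S \ R).card = S.card - R.card := Finset.card_sdiff_of_subset hS.2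
      have h2 : Rᶜ.card = m - R.card := by
        rw [Finset.card_compl]; simp
      have h3 : R.card ≤ S.card := Finset.card_le_card hS.2
      have h4 : S.card ≤ m := by
        simpa using Finset.card_le_card (Finset.subset_univ S)
      omega
  rw [key]
  have hsplit : ∀ T ∈ Rᶜ.powerset, (-1 : ℂ) ^ (Rᶜ.card - T.card)
      = (-1 : ℂ) ^ Rᶜ.card * (-1 : ℂ) ^ T.card := by
    intro T hT
    have hle : T.card ≤ Rᶜ.card := Finset.card_le_card (Finset.mem_powerset.1 hT)
    have h1 : (-1 : ℂ) ^ (Rᶜ.card - T.card) * (-1 : ℂ) ^ T.card = (-1 : ℂ) ^ Rᶜ.card := by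
      rw [← pow_add, Nat.sub_add_cancel hle]
    have h2 : (-1 : ℂ) ^ T.card * (-1 : ℂ) ^ T.card = 1 := by
      rw [← pow_add, ← two_mul, pow_mul]; simp
    calc (-1 : ℂ) ^ (Rᶜ.card - T.card)
        = (-1 : ℂ) ^ (Rᶜ.card - T.card) * ((-1 : ℂ) ^ T.card * (-1 : ℂ) ^ T.card) := by
          rw [h2, mul_one]
      _ = ((-1 : ℂ) ^ (Rᶜ.card - T.card) * (-1 : ℂ) ^ T.card) * (-1 : ℂ) ^ T.card := by ring
      _ = (-1 : ℂ) ^ Rᶜ.card * (-1 : ℂ) ^ T.card := by rw [h1]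
  rw [Finset.sum_congr rfl hsplit, ← Finset.mul_sum]
  have hz : (∑ T ∈ Rᶜ.powerset, (-1 : ℂ) ^ T.card)
      = if Rᶜ = ∅ then 1 else 0 := by
    have := Finset.sum_powerset_neg_one_pow_card (x := Rᶜ)
    have := congrArg (fun z : ℤ => (z : ℂ)) this
    push_cast at this
    convert this using 2 <;> simp
  rw [hz]
  by_cases hR : R = Finset.univ
  · simp [hR]
  · have : Rᶜ ≠ ∅ := by
      simpa [Finset.compl_eq_empty_iff] using hR
    simp [hR, this]

open Finset in
lemma polar (m : ℕ) (t : Fin m → ℂ) :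
    (∑ S : Finset (Fin m), (-1 : ℂ) ^ (m - S.card) * (∑ j ∈ S, t j) ^ m)
      = (m.factorial : ℂ) * ∏ j, t j := by
  have expand : ∀ S : Finset (Fin m),
      (∑ j ∈ S, t j) ^ m = ∑ f ∈ Fintype.piFinset (fun _ : Fin m => S), ∏ i, t (f i) := by
    intro S
    rw [← Finset.prod_univ_sum]
    simp [Finset.prod_const]
  calc (∑ S : Finset (Fin m), (-1 : ℂ) ^ (m - S.card) * (∑ j ∈ S, t j) ^ m)
      = ∑ S : Finset (Fin m), ∑ f : Fin m → Fin m,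
          (if ∀ i, f i ∈ S then (-1 : ℂ) ^ (m - S.card) * ∏ i, t (f i) else 0) := by
        refine Finset.sum_congr rfl fun S _ => ?_
        rw [expand S, Finset.mul_sum]
        have hpi : Fintype.piFinset (fun _ : Fin m => S)
            = Finset.univ.filter (fun f : Fin m → Fin m => ∀ i, f i ∈ S) := by
          ext f; simp [Fintype.mem_piFinset]
        rw [hpi, Finset.sum_filter]
    _ = ∑ f : Fin m → Fin m, (∏ i, t (f i)) *
          (∑ S : Finset (Fin m), if Finset.image f Finset.univ ⊆ S then (-1 : ℂ) ^ (m - S.card) else 0) := by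
        rw [Finset.sum_comm]
        refine Finset.sum_congr rfl fun f _ => ?_
        rw [Finset.mul_sum]
        refine Finset.sum_congr rfl fun S _ => ?_
        have : (∀ i, f i ∈ S) ↔ Finset.image f Finset.univ ⊆ S := by
          simp [Finset.image_subset_iff]
        simp only [this]
        split <;> ring
    _ = ∑ f ∈ Finset.univ.filter (fun f : Fin m → Fin m => Function.Bijective f), ∏ i, t (f i) := by
        rw [Finset.sum_filter]
        refine Finset.sum_congr rfl fun f _ => ?_
        rw [polar_sup]
        have : Finset.image f Finset.univ = Finset.univ ↔ Function.Bijective f := by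
          rw [Finset.eq_univ_iff_forall]
          constructor
          · intro h
            have hsurj : Function.Surjective f := by
              intro b
              have := h b
              simpa [Finset.mem_image] using this
            exact ⟨Finite.injective_iff_surjective.2 hsurj, hsurj⟩
          · intro h b
            obtain ⟨a, ha⟩ := h.2 b
            simp [Finset.mem_image]
            exact ⟨a, ha⟩
        simp only [this]
        split <;> simp
    _ = ∑ σ : Equiv.Perm (Fin m), ∏ i, t (σ i) := by
        have himg : Finset.univ.filter (fun f : Fin m → Fin m => Function.Bijective f)
            = Finset.image (fun σ : Equiv.Perm (Fin m) => ⇑σ) Finset.univ := by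
          ext f
          simp only [Finset.mem_filter, Finset.mem_univ, true_and, Finset.mem_image]
          constructor
          · intro h
            exact ⟨Equiv.ofBijective f h, rfl⟩
          · rintro ⟨σ, _, rfl⟩
            exact σ.bijective
        rw [himg, Finset.sum_image (fun σ _ τ _ h => Equiv.coe_fn_injective h)]
    _ = (m.factorial : ℂ) * ∏ j, t j := by
        have : ∀ σ : Equiv.Perm (Fin m), ∏ i, t (σ i) = ∏ j, t j := fun σ => Equiv.prod_comp σ t
        rw [Finset.sum_congr rfl fun σ _ => this σ, Finset.sum_const]
        simp [Fintype.card_perm, mul_comm]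

lemma mono_mem {F G : Type*} [NormedAddCommGroup F] [NormedSpace ℂ F]
    [NormedAddCommGroup G] [NormedSpace ℂ G]
    (m : ℕ) (ψ : Fin m → (F →L[ℂ] ℂ)) (b : G) :
    (fun y => (∏ i, ψ i y) • b) ∈ Submodule.span ℂ
      {h : F → G | ∃ (φ : F →L[ℂ] ℂ) (c : G), h = fun y => (φ y) ^ m • c} := by
  have hfac : (m.factorial : ℂ) ≠ 0 := by
    exact_mod_cast Nat.factorial_ne_zero m
  have key : (fun y : F => (∏ i, ψ i y) • b)
      = ∑ S : Finset (Fin m), ((m.factorial : ℂ)⁻¹ * (-1 : ℂ) ^ (m - S.card)) •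
          (fun y => ((∑ i ∈ S, ψ i) y) ^ m • b) := by
    funext y
    simp only [Finset.sum_apply, Pi.smul_apply, smul_smul]
    rw [← Finset.sum_smul]
    congr 1
    have : ∀ S : Finset (Fin m), ((∑ i ∈ S, ψ i) y) = ∑ i ∈ S, ψ i y := by
      intro S; simp
    simp only [this]
    rw [Finset.sum_congr rfl (fun S _ => mul_assoc ((m.factorial : ℂ)⁻¹) _ _),
      ← Finset.mul_sum, polar m (fun i => ψ i y)]
    field_simp
  rw [key]
  exact Submodule.sum_mem _ fun S _ => Submodule.smul_mem _ _
    (Submodule.subset_span ⟨∑ i ∈ S, ψ i, b, rfl⟩)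

lemma finrank_mem {E F G : Type*} [NormedAddCommGroup E] [NormedSpace ℂ E]
    [NormedAddCommGroup F] [NormedSpace ℂ F]
    [NormedAddCommGroup G] [NormedSpace ℂ G]
    (m : ℕ) (M : ContinuousMultilinearMap ℂ (fun _ : Fin m => E) G)
    (A : F →L[ℂ] E) (hA : FiniteDimensional ℂ (LinearMap.range (A : F →ₗ[ℂ] E))) :
    (fun y => M (fun _ : Fin m => A y)) ∈ Submodule.span ℂ
      {h : F → G | ∃ (φ : F →L[ℂ] ℂ) (c : G), h = fun y => (φ y) ^ m • c} := by
  set V := LinearMap.range (A : F →ₗ[ℂ] E) with hV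
  haveI : FiniteDimensional ℂ V := hA
  set n := Module.finrank ℂ V with hn
  let bV : Module.Basis (Fin n) ℂ V := Module.finBasis ℂ V
  let s : F →L[ℂ] V := A.codRestrict V (fun y => LinearMap.mem_range_self _ y)
  let ψ : Fin n → (F →L[ℂ] ℂ) :=
    fun i => (LinearMap.toContinuousLinearMap (bV.coord i)).comp s
  let a : Fin n → E := fun i => (bV i : E)
  have hAy : ∀ y : F, A y = ∑ i, ψ i y • a i := by
    intro y
    have h1 : (s y : E) = A y := rfl
    have h2 : ∑ i, bV.repr (s y) i • bV i = s y := bV.sum_repr (s y)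
    have h3 := congrArg (Subtype.val) h2
    rw [← h1]
    rw [← h3]
    push_cast
    refine Finset.sum_congr rfl fun i _ => ?_
    congr 1
  have hrep : (fun y => M (fun _ : Fin m => A y))
      = fun y => ∑ f : Fin m → Fin n, (∏ j, ψ (f j) y) • M (fun j => a (f j)) := by
    funext y
    rw [hAy y]
    rw [M.map_sum (fun (_ : Fin m) (i : Fin n) => ψ i y • a i)]
    refine Finset.sum_congr rfl fun f _ => ?_
    exact M.map_smul_univ (fun j => ψ (f j) y) (fun j => a (f j))
  rw [hrep]
  have : (fun y : F => ∑ f : Fin m → Fin n, (∏ j, ψ (f j) y) • M (fun j => a (f j)))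
      = ∑ f : Fin m → Fin n, (fun y : F => (∏ j, ψ (f j) y) • M (fun j => a (f j))) := by
    funext y; simp
  rw [this]
  exact Submodule.sum_mem _ fun f _ => mono_mem m (fun j => ψ (f j)) _

/-- Let `E, F` be complex normed spaces, `G` a complex Banach space, `M : E^m → G` a
continuous symmetric `m`-multilinear map, and `T : F → E` an approximable operator
(a limit in operator norm of continuous finite-rank operators). Then the
`m`-homogeneous polynomial `y ↦ M(Ty,…,Ty)` is approximable: it can be uniformly
approximated on the closed unit ball of `F` by polynomials of finite type, i.e. by
elements of the span of the functions `y ↦ (ψ y)^m • b` with `ψ ∈ F'`, `b ∈ G`. -/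
theorem stmt9 {E F G : Type*} [NormedAddCommGroup E] [NormedSpace ℂ E]
    [NormedAddCommGroup F] [NormedSpace ℂ F]
    [NormedAddCommGroup G] [NormedSpace ℂ G] [CompleteSpace G]
    (m : ℕ) (M : ContinuousMultilinearMap ℂ (fun _ : Fin m => E) G)
    (hsymm : ∀ (σ : Equiv.Perm (Fin m)) (v : Fin m → E), M (v ∘ σ) = M v)
    (T : F →L[ℂ] E)
    (hT : T ∈ closure {A : F →L[ℂ] E | FiniteDimensional ℂ (LinearMap.range (A : F →ₗ[ℂ] E))}) :
    ∀ ε > 0, ∃ g ∈ Submodule.span ℂ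
        {h : F → G | ∃ (ψ : F →L[ℂ] ℂ) (b : G), h = fun y => (ψ y) ^ m • b},
      ∀ y : F, ‖y‖ ≤ 1 → ‖M (fun _ => T y) - g y‖ ≤ ε := by
  intro ε hε
  set C : ℝ := ‖M‖ * m * (‖T‖ + 1) ^ (m - 1) + 1 with hC
  have hC1 : (1 : ℝ) ≤ C := by
    have h0 : 0 ≤ ‖M‖ * m * (‖T‖ + 1) ^ (m - 1) := by positivity
    linarith
  have hCpos : 0 < C := lt_of_lt_of_le one_pos hC1
  set δ : ℝ := min 1 (ε / C) with hδ
  have hδpos : 0 < δ := lt_min one_pos (div_pos hε hCpos)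
  obtain ⟨A, hAmem, hdist⟩ := Metric.mem_closure_iff.1 hT δ hδpos
  refine ⟨fun y => M (fun _ : Fin m => A y), finrank_mem m M A hAmem, fun y hy => ?_⟩
  have hTA : ‖T - A‖ < δ := by
    rw [← dist_eq_norm]; exact hdist
  have hδ1 : δ ≤ 1 := min_le_left _ _
  have hδ2 : δ ≤ ε / C := min_le_right _ _
  have hTy : ‖(fun _ : Fin m => T y)‖ ≤ ‖T‖ := by
    apply pi_norm_le_iff_of_nonneg (norm_nonneg T) |>.2
    intro i
    calc ‖T y‖ ≤ ‖T‖ * ‖y‖ := T.le_opNorm y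
      _ ≤ ‖T‖ * 1 := mul_le_mul_of_nonneg_left hy (norm_nonneg T)
      _ = ‖T‖ := mul_one _
  have hAnorm : ‖A‖ ≤ ‖T‖ + 1 := by
    have : ‖A‖ ≤ ‖T‖ + ‖T - A‖ := by
      calc ‖A‖ = ‖T - (T - A)‖ := by congr 1; abel
        _ ≤ ‖T‖ + ‖T - A‖ := norm_sub_le _ _
    linarith
  have hAy : ‖(fun _ : Fin m => A y)‖ ≤ ‖T‖ + 1 := by
    apply pi_norm_le_iff_of_nonneg (by positivity) |>.2
    intro i
    calc ‖A y‖ ≤ ‖A‖ * ‖y‖ := A.le_opNorm y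
      _ ≤ (‖T‖ + 1) * 1 := by
          apply mul_le_mul hAnorm hy (norm_nonneg y) (by positivity)
      _ = ‖T‖ + 1 := mul_one _
  have hdiff : ‖(fun _ : Fin m => T y) - (fun _ : Fin m => A y)‖ ≤ δ := by
    apply pi_norm_le_iff_of_nonneg (le_of_lt hδpos) |>.2
    intro i
    calc ‖(T y) - (A y)‖ = ‖(T - A) y‖ := by simp
      _ ≤ ‖T - A‖ * ‖y‖ := (T - A).le_opNorm y
      _ ≤ δ * 1 := by
          apply mul_le_mul (le_of_lt hTA) hy (norm_nonneg y) (le_of_lt hδpos)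
      _ = δ := mul_one _
  calc ‖M (fun _ : Fin m => T y) - M (fun _ : Fin m => A y)‖
      ≤ ‖M‖ * Fintype.card (Fin m) *
          max ‖(fun _ : Fin m => T y)‖ ‖(fun _ : Fin m => A y)‖ ^ (Fintype.card (Fin m) - 1) *
          ‖(fun _ : Fin m => T y) - (fun _ : Fin m => A y)‖ :=
        M.norm_image_sub_le _ _
    _ ≤ ‖M‖ * m * (‖T‖ + 1) ^ (m - 1) * δ := by
        simp only [Fintype.card_fin]
        gcongr
        exact max_le (le_trans hTy (by linarith)) hAy
    _ ≤ C * δ := by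
        have h0 : 0 ≤ δ := le_of_lt hδpos
        nlinarith
    _ ≤ C * (ε / C) := by gcongr
    _ = ε := by field_simp
end

section
/- Let F be a Fréchet space over ℂ and let E = F'_c be the topological dual of F endowed with the topology of uniform convergence on compact subsets of F. Then E is semi-Montel: every von Neumann bounded subset of E is relatively compact (its closure in E is compact). -/
open Bornology Topology
open scoped UniformConvergence Uniformity

/-- Let `F` be a Fréchet space over `ℂ` and `E = F'_c` its topological dual endowed with
the topology of uniform convergence on the compact subsets of `F`. Then `E` is
semi-Montel: every von Neumann bounded subset of `E` is relatively compact. -/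
theorem stmt10 {F : Type*} [AddCommGroup F] [Module ℂ F] [UniformSpace F] [IsUniformAddGroup F]
    [ContinuousSMul ℂ F] [CompleteSpace F] [TopologicalSpace.MetrizableSpace F]
    [Module ℝ F] [IsScalarTower ℝ ℂ F] [LocallyConvexSpace ℝ F]
    (B : Set (UniformConvergenceCLM (RingHom.id ℂ) ℂ {K : Set F | IsCompact K}))
    (hB : IsVonNBounded ℂ B) :
    IsCompact (closure B) := by
  classical
  let 𝔖 : Set (Set F) := {K : Set F | IsCompact K}
  -- F is a Baire space (complete metrizable)
  haveI : (𝓤 F).IsCountablyGenerated := by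
    rw [uniformity_eq_comap_nhds_zero]
    infer_instance
  haveI : BaireSpace F := inferInstance
  have h𝔖U : ⋃₀ 𝔖 = Set.univ :=
    Set.eq_univ_of_forall fun x =>
      Set.mem_sUnion_of_mem (Set.mem_singleton x) (isCompact_singleton : IsCompact {x})
  have hRG : IsCoherentWith 𝔖 := CompactlyCoherentSpace.isCoherentWith
  -- pointwise boundedness
  have hpt : ∀ x : F, ∃ r : ℝ, ∀ f ∈ B,
      ‖(f : F →L[ℂ] ℂ) x‖ ≤ r := by
    intro x
    have h1 : IsVonNBounded ℂ (Set.image2 (fun f (y : F) => f y) B {x}) :=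
      UniformConvergenceCLM.isVonNBounded_image2_apply hB
        (show {x} ∈ 𝔖 from isCompact_singleton)
    rw [NormedSpace.isVonNBounded_iff] at h1
    rcases (isBounded_iff_forall_norm_le.mp h1) with ⟨r, hr⟩
    exact ⟨r, fun f hf => hr _ (Set.mem_image2_of_mem hf rfl)⟩
  -- equicontinuity via Banach-Steinhaus
  have heq : UniformEquicontinuous
      (DFunLike.coe ∘ (fun i : B => i.1)) := by
    refine (norm_withSeminorms ℂ ℂ).banach_steinhaus
      (𝓕 := fun i : B => (i.1 : F →L[ℂ] ℂ)) ?_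
    intro _ x
    rcases hpt x with ⟨r, hr⟩
    exact ⟨r, by rintro y ⟨i, rfl⟩; exact hr i.1 i.2⟩
  -- closed embedding into the function space
  have hclemb : IsClosedEmbedding (UniformOnFun.ofFun 𝔖 ∘
      (DFunLike.coe : UniformConvergenceCLM (RingHom.id ℂ) ℂ 𝔖 → F → ℂ)) := by
    refine ⟨UniformConvergenceCLM.isEmbedding_coeFn _ _ _, ?_⟩
    have H₁ : IsClosed {f : F →ᵤ[𝔖] ℂ | Continuous ((UniformOnFun.toFun 𝔖) f)} :=
      UniformOnFun.isClosed_setOf_continuous hRG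
    have hrange : Set.range (UniformOnFun.ofFun 𝔖 ∘
        (DFunLike.coe : UniformConvergenceCLM (RingHom.id ℂ) ℂ 𝔖 → F → ℂ)) =
        {f : F →ᵤ[𝔖] ℂ | Continuous ((UniformOnFun.toFun 𝔖) f)} ∩
        ((UniformOnFun.toFun 𝔖) ⁻¹'
          Set.range ((⇑) : (F →ₗ[ℂ] ℂ) → F → ℂ)) := by
      ext f
      constructor
      · rintro ⟨g, rfl⟩
        exact ⟨(g : F →L[ℂ] ℂ).continuous, (g : F →L[ℂ] ℂ).toLinearMap, rfl⟩
      · rintro ⟨hc, g, hg⟩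
        have hcg : Continuous g := by rw [show ⇑g = (UniformOnFun.toFun 𝔖) f from hg]; exact hc
        exact ⟨(⟨g, hcg⟩ : F →L[ℂ] ℂ),
          congrArg (UniformOnFun.ofFun 𝔖) hg⟩
    rw [hrange]
    exact H₁.inter <| (LinearMap.isClosed_range_coe F ℂ (RingHom.id ℂ)).preimage
      (UniformOnFun.uniformContinuous_toFun h𝔖U).continuous
  -- Arzelà–Ascoli
  refine ArzelaAscoli.isCompact_closure_of_isClosedEmbedding
    (fun K hK => hK) hclemb (fun K _ => ?_) (fun K _ x _ => ?_)
  · exact (heq.equicontinuous).equicontinuousOn K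
  · rcases hpt x with ⟨r, hr⟩
    exact ⟨Metric.closedBall 0 r, isCompact_closedBall 0 r,
      fun f hf => by simpa [Metric.mem_closedBall, dist_zero_right] using hr f hf⟩
end

section
/- Let F be a Fréchet space over ℂ and let E = F'_c be the topological dual of F endowed with the topology of uniform convergence on compact subsets of F. Then E is hemicompact: there exists a sequence (K_n)_{n∈ℕ} of compact subsets of E such that every compact subset of E is contained in some K_n. -/
open Set Filter Topology


section aux

variable {F : Type*} [AddCommGroup F] [Module ℂ F] [UniformSpace F] [IsUniformAddGroup F]
    [ContinuousSMul ℂ F] [CompleteSpace F] [TopologicalSpace.MetrizableSpace F]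

set_option linter.unusedSectionVars false

lemma aux_cover : ⋃₀ {K : Set F | IsCompact K} = Set.univ :=
  eq_univ_of_forall fun x => ⟨{x}, isCompact_singleton, rfl⟩

lemma aux_baire : BaireSpace F := by
  haveI : Filter.IsCountablyGenerated (uniformity F) := by
    rw [uniformity_eq_comap_nhds_zero F]
    infer_instance
  letI := UniformSpace.pseudoMetricSpace F
  exact BaireSpace.of_completelyPseudoMetrizable

lemma aux_complete :
    CompleteSpace (UniformConvergenceCLM (RingHom.id ℂ) ℂ {K : Set F | IsCompact K}) :=
  UniformConvergenceCLM.completeSpace _ _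
    (CompactlyCoherentSpace.isCoherentWith) aux_cover

lemma aux_clemb : IsClosedEmbedding
    (UniformOnFun.ofFun {K : Set F | IsCompact K} ∘
      (DFunLike.coe : UniformConvergenceCLM (RingHom.id ℂ) ℂ {K : Set F | IsCompact K} → F → ℂ)) := by
  haveI : T2Space (UniformOnFun F ℂ {K : Set F | IsCompact K}) :=
    UniformOnFun.t2Space_of_covering aux_cover
  haveI := aux_complete (F := F)
  exact (UniformConvergenceCLM.isUniformEmbedding_coeFn _ _ _).isClosedEmbedding

lemma aux_equi (V : Set F) (hV : V ∈ 𝓝 (0 : F))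
    (s : Set (UniformConvergenceCLM (RingHom.id ℂ) ℂ {K : Set F | IsCompact K}))
    (hs : ∀ f ∈ s, ∀ x ∈ V, ‖f x‖ ≤ 1) :
    Equicontinuous (fun f : s => ((f.1 : F →L[ℂ] ℂ) : F → ℂ)) := by
  apply equicontinuous_of_equicontinuousAt_zero (fun f : s => (f.1 : F →L[ℂ] ℂ))
  intro U hU
  obtain ⟨ε, hε, hball⟩ := Metric.mem_uniformity_dist.mp hU
  set c : ℂ := ((ε / 2 : ℝ) : ℂ) with hcdef
  have hc : c ≠ 0 := by
    simp only [hcdef, ne_eq, Complex.ofReal_eq_zero]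
    positivity
  have hcn : ‖c‖ < ε := by
    rw [hcdef, Complex.norm_real, Real.norm_eq_abs, abs_of_pos (half_pos hε)]
    linarith
  filter_upwards [(set_smul_mem_nhds_zero_iff hc).mpr hV] with x hx i
  obtain ⟨y, hy, rfl⟩ := hx
  have : ‖(i.1 : F →L[ℂ] ℂ) (c • y)‖ < ε := by
    rw [map_smul, norm_smul]
    calc ‖c‖ * ‖(i.1 : F →L[ℂ] ℂ) y‖ ≤ ‖c‖ * 1 :=
      mul_le_mul_of_nonneg_left (hs i.1 i.2 y hy) (norm_nonneg c)
    _ = ‖c‖ := mul_one _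
    _ < ε := hcn
  apply hball
  simpa [map_zero, dist_eq_norm] using this

lemma aux_ptwise (V : Set F) (hV : V ∈ 𝓝 (0 : F)) (x : F) :
    ∃ Q : Set ℂ, IsCompact Q ∧
      ∀ f : (UniformConvergenceCLM (RingHom.id ℂ) ℂ {K : Set F | IsCompact K}),
        (∀ z ∈ V, ‖f z‖ ≤ 1) → f x ∈ Q := by
  obtain ⟨r, hr, habs⟩ := ((absorbent_nhds_zero (𝕜 := ℂ) hV) x).exists_pos
  set a : ℂ := ((r : ℝ) : ℂ)
  have har : ‖a‖ = r := by
    simp [a, abs_of_pos hr]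
  have hx := habs a har.ge (Set.mem_singleton x)
  refine ⟨Metric.closedBall 0 r, isCompact_closedBall _ _, fun f hf => ?_⟩
  obtain ⟨y, hy, rfl⟩ := hx
  rw [Metric.mem_closedBall, dist_zero_right]
  calc ‖f (a • y)‖ = ‖a‖ * ‖f y‖ := by rw [map_smul, norm_smul]
  _ ≤ ‖a‖ * 1 := mul_le_mul_of_nonneg_left (hf y hy) (norm_nonneg a)
  _ = r := by rw [mul_one, har]

lemma aux_polar_compact (V : Set F) (hV : V ∈ 𝓝 (0 : F)) :
    IsCompact (closure {f : UniformConvergenceCLM (RingHom.id ℂ) ℂ {K : Set F | IsCompact K} |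
      ∀ x ∈ V, ‖f x‖ ≤ 1}) := by
  apply ArzelaAscoli.isCompact_closure_of_isClosedEmbedding (fun K hK => hK) aux_clemb
  · intro K _
    exact (aux_equi V hV _ (fun f hf => hf)).equicontinuousOn K
  · intro K _ x _
    obtain ⟨Q, hQ, hQ'⟩ := aux_ptwise V hV x
    exact ⟨Q, hQ, fun f hf => hQ' f hf⟩

end aux

/-- Let `F` be a Fréchet space over `ℂ` and `E = F'_c` its topological dual endowed with
the topology of uniform convergence on the compact subsets of `F`. Then `E` is
hemicompact: there is a sequence of compact sets such that every compact subset of `E`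
is contained in one of them. -/
theorem stmt11 {F : Type*} [AddCommGroup F] [Module ℂ F] [UniformSpace F] [IsUniformAddGroup F]
    [ContinuousSMul ℂ F] [CompleteSpace F] [TopologicalSpace.MetrizableSpace F]
    [Module ℝ F] [IsScalarTower ℝ ℂ F] [LocallyConvexSpace ℝ F] :
    ∃ K : ℕ → Set (UniformConvergenceCLM (RingHom.id ℂ) ℂ {K : Set F | IsCompact K}),
      (∀ n, IsCompact (K n)) ∧
      ∀ C : Set (UniformConvergenceCLM (RingHom.id ℂ) ℂ {K : Set F | IsCompact K}),
        IsCompact C → ∃ n, C ⊆ K n := by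
  obtain ⟨V, hV⟩ := (𝓝 (0 : F)).exists_antitone_basis
  refine ⟨fun n => closure {f | ∀ x ∈ V n, ‖f x‖ ≤ 1},
    fun n => aux_polar_compact (V n) (hV.mem n), fun C hC => ?_⟩
  haveI : BaireSpace F := aux_baire
  -- Banach-Steinhaus: C is equicontinuous
  set 𝓕 : C → F →L[ℂ] ℂ := fun f => (f.1 : F →L[ℂ] ℂ) with h𝓕
  have hq := norm_withSeminorms ℂ ℂ
  have hbdd : ∀ (k : Fin 1) (x : F),
      BddAbove (Set.range fun i : C => ‖𝓕 i x‖) := by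
    intro k x
    haveI := UniformConvergenceCLM.continuousEvalConst (RingHom.id ℂ) ℂ
      {K : Set F | IsCompact K} aux_cover
    have hev : Continuous fun f : UniformConvergenceCLM (RingHom.id ℂ) ℂ
        {K : Set F | IsCompact K} => ‖f x‖ := continuous_norm.comp (continuous_eval_const x)
    have hcomp : IsCompact ((fun f : UniformConvergenceCLM (RingHom.id ℂ) ℂ
        {K : Set F | IsCompact K} => ‖f x‖) '' C) := hC.image hev
    apply hcomp.bddAbove.mono
    rintro _ ⟨i, rfl⟩
    exact ⟨i.1, i.2, rfl⟩
  have hueq : UniformEquicontinuous (DFunLike.coe ∘ 𝓕) := hq.banach_steinhaus hbdd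
  have heqA : EquicontinuousAt (DFunLike.coe ∘ 𝓕) 0 := hueq.equicontinuous 0
  have hS := heqA {p : ℂ × ℂ | dist p.1 p.2 < 1} (Metric.dist_mem_uniformity one_pos)
  obtain ⟨n, -, hn⟩ := hV.toHasBasis.mem_iff.mp hS
  refine ⟨n, fun f hf => subset_closure ?_⟩
  intro x hx
  have h1 := hn hx ⟨f, hf⟩
  simp only [Set.mem_setOf_eq, Function.comp_apply, h𝓕, map_zero, dist_zero_left] at h1
  have h2 : dist (f 0) (f x) ≤ 1 := h1.le
  simpa [dist_zero_left] using h2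
end

section
/- Let F be a Fréchet space over ℂ and let E = F'_c be the topological dual of F endowed with the topology of uniform convergence on compact subsets of F. Then E is a k-space: a subset A ⊆ E is closed if and only if A ∩ K is closed in K for every compact subset K of E. -/
open Set Filter Topology Metric Pointwise

namespace BD

variable {F : Type*} [AddCommGroup F] [Module ℂ F] [UniformSpace F] [IsUniformAddGroup F]
    [ContinuousSMul ℂ F] [TopologicalSpace.MetrizableSpace F]

/-- The dual of `F` with the topology of uniform convergence on compact sets. -/
abbrev EE (F : Type*) [AddCommGroup F] [Module ℂ F] [UniformSpace F] : Type _ :=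
  UniformConvergenceCLM (RingHom.id ℂ) ℂ {K : Set F | IsCompact K}

lemma sUnion_compacts : ⋃₀ {K : Set F | IsCompact K} = univ :=
  eq_univ_of_forall fun x => ⟨{x}, isCompact_singleton, rfl⟩

lemma continuous_ev (x : F) : Continuous fun f : EE F => f x := by
  haveI := UniformConvergenceCLM.continuousEvalConst (RingHom.id ℂ) ℂ
    {K : Set F | IsCompact K} sUnion_compacts
  exact continuous_eval_const x

/-- The (absolute) polar of a set. -/
def pol (s : Set F) : Set (EE F) := {f | ∀ x ∈ s, ‖f x‖ ≤ 1}

lemma isClosed_pol (s : Set F) : IsClosed (pol s) := by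
  have : pol s = ⋂ x ∈ s, (fun f : EE F => f x) ⁻¹' closedBall 0 1 := by
    ext f; simp [pol, mem_closedBall_zero_iff]
  rw [this]
  exact isClosed_biInter fun x _ => Metric.isClosed_closedBall.preimage (continuous_ev x)

lemma pol_anti {s t : Set F} (h : s ⊆ t) : pol t ⊆ pol s :=
  fun _ hf x hx => hf x (h hx)

lemma equicontinuous_pol {U : Set F} (hU : U ∈ 𝓝 0) :
    Equicontinuous fun f : pol U => ((f : EE F) : F → ℂ) := by
  refine equicontinuous_of_equicontinuousAt_zero (fun f : pol U => (f : EE F)) ?_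
  rw [Metric.equicontinuousAt_iff_right]
  intro ε hε
  set c : ℂ := ((ε / 2 : ℝ) : ℂ) with hc_def
  have hc : c ≠ 0 := by
    simp only [hc_def, ne_eq, Complex.ofReal_eq_zero]
    positivity
  have hcU : c • U ∈ 𝓝 (0 : F) := (set_smul_mem_nhds_zero_iff hc).2 hU
  filter_upwards [hcU] with x hx f
  obtain ⟨y, hy, rfl⟩ := hx
  have h1 : ‖(f : EE F) y‖ ≤ 1 := f.2 y hy
  have h2 : ‖(f : EE F) (c • y)‖ ≤ ε / 2 := by
    rw [map_smul, smul_eq_mul, norm_mul]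
    have hcn : ‖c‖ = ε / 2 := by
      rw [hc_def, Complex.norm_real, Real.norm_of_nonneg (by positivity)]
    rw [hcn]
    calc ε / 2 * ‖(f : EE F) y‖ ≤ ε / 2 * 1 :=
          mul_le_mul_of_nonneg_left h1 (by positivity)
      _ = ε / 2 := mul_one _
  simp only [Function.comp_apply, map_zero, dist_zero_left]
  exact h2.trans_lt (by linarith)

lemma isCompact_pol {U : Set F} (hU : U ∈ 𝓝 0) : IsCompact (pol U : Set (EE F)) := by
  haveI : SequentialSpace F := inferInstance
  have h𝔖 : Topology.IsCoherentWith {K : Set F | IsCompact K} :=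
    Topology.IsCoherentWith.of_seq fun _u _x hux ↦ hux.isCompact_insert_range
  -- the coercion into `F →ᵤ[𝔖] ℂ` is a closed embedding
  have hemb : IsClosedEmbedding
      (UniformOnFun.ofFun {K : Set F | IsCompact K} ∘ (DFunLike.coe : EE F → F → ℂ)) := by
    refine ⟨(UniformConvergenceCLM.isUniformEmbedding_coeFn _ _ _).isEmbedding, ?_⟩
    have H₁ := UniformOnFun.isClosed_setOf_continuous (β := ℂ) h𝔖
    convert H₁.inter <| (LinearMap.isClosed_range_coe F ℂ (RingHom.id ℂ)).preimage
      (UniformOnFun.uniformContinuous_toFun sUnion_compacts).continuous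
    exact ContinuousLinearMap.range_coeFn_eq
  have hcl := ArzelaAscoli.isCompact_closure_of_isClosedEmbedding
    (X := F) (α := ℂ) (ι := EE F) (F := DFunLike.coe)
    (𝔖 := {K : Set F | IsCompact K}) (fun K hK => hK) hemb
    (s := pol U)
    (fun K _ => (equicontinuous_pol hU).equicontinuousOn K)
    ?_
  · rwa [(isClosed_pol U).closure_eq] at hcl
  · intro K _ x _
    obtain ⟨c, hc⟩ := ((absorbent_nhds_zero hU : Absorbent ℂ U) x).exists_pos
    obtain ⟨d, hd, hxd⟩ : ∃ d : ℂ, ‖d‖ = c ∧ x ∈ d • U := by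
      refine ⟨(c : ℂ), by simp [hc.1.le, abs_of_nonneg], ?_⟩
      exact hc.2 (c : ℂ) (by simp [abs_of_nonneg hc.1.le]) rfl
    refine ⟨closedBall 0 c, isCompact_closedBall 0 c, ?_⟩
    intro f hf
    obtain ⟨y, hy, rfl⟩ := hxd
    rw [mem_closedBall_zero_iff, map_smul, smul_eq_mul, norm_mul, ← hd]
    calc ‖d‖ * ‖f y‖ ≤ ‖d‖ * 1 := mul_le_mul_of_nonneg_left (hf y hy) (norm_nonneg _)
      _ = ‖d‖ := mul_one _

lemma exists_mem_pol (f : EE F) {u : ℕ → Set F} (hu : (𝓝 (0 : F)).HasAntitoneBasis u) :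
    ∃ n, f ∈ pol (u n) := by
  have hf : Continuous (f : F → ℂ) := map_continuous f
  have hmem : (f : F → ℂ) ⁻¹' closedBall 0 1 ∈ 𝓝 (0 : F) := by
    apply hf.continuousAt.preimage_mem_nhds
    rw [show (f : F → ℂ) 0 = 0 from map_zero f]
    exact closedBall_mem_nhds 0 one_pos
  obtain ⟨n, -, hn⟩ := hu.1.mem_iff.mp hmem
  exact ⟨n, fun x hx => mem_closedBall_zero_iff.1 (hn hx)⟩

lemma zero_case (A : Set (EE F)) (h0 : (0 : EE F) ∉ A)
    (hA : ∀ K : Set (EE F), IsCompact K → IsCompact (A ∩ K)) : Aᶜ ∈ 𝓝 (0 : EE F) := by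
  classical
  obtain ⟨u, hu⟩ := (𝓝 (0 : F)).exists_antitone_basis
  have hu_mem : ∀ n, u n ∈ 𝓝 (0 : F) := fun n => hu.1.mem_of_mem trivial
  -- base step of the induction
  have base : ∃ b : Finset F, pol (↑b) ∩ (A ∩ pol (u 0)) = ∅ := by
    have hs : IsCompact (A ∩ pol (u 0)) := hA _ (isCompact_pol (hu_mem 0))
    have hempty : A ∩ pol (u 0) ∩ ⋂ x : F, {f : EE F | ‖f x‖ ≤ 1} = ∅ := by
      rw [eq_empty_iff_forall_notMem]
      rintro f ⟨⟨hfA, -⟩, hfi⟩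
      rw [mem_iInter] at hfi
      have hf0 : f = 0 := by
        apply DFunLike.ext
        intro x
        by_contra hx
        have h2 := hfi ((2 / f x) • x)
        rw [mem_setOf_eq, map_smul, smul_eq_mul, div_mul_cancel₀ (2 : ℂ) hx] at h2
        norm_num at h2
      exact h0 (hf0 ▸ hfA)
    obtain ⟨t, ht⟩ := hs.elim_finite_subfamily_closed
      (fun x : F => {f : EE F | ‖f x‖ ≤ 1})
      (fun x => isClosed_le (continuous_norm.comp (continuous_ev x)) continuous_const) hempty
    refine ⟨t, eq_empty_iff_forall_notMem.2 fun f hf => ?_⟩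
    refine eq_empty_iff_forall_notMem.1 ht f ⟨hf.2, ?_⟩
    simp only [mem_iInter, mem_setOf_eq]
    intro x hx
    exact hf.1 x hx
  -- inductive step
  have key : ∀ (n : ℕ) (b : Finset F), pol ↑b ∩ (A ∩ pol (u n)) = ∅ →
      ∃ c : Finset F, b ⊆ c ∧ (∀ x ∈ c, x ∈ b ∨ x ∈ u n) ∧
        pol ↑c ∩ (A ∩ pol (u (n + 1))) = ∅ := by
    intro n b hb
    have hs : IsCompact (pol (↑b) ∩ (A ∩ pol (u (n + 1)))) :=
      (hA _ (isCompact_pol (hu_mem (n + 1)))).inter_left (isClosed_pol (b : Set F))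
    have hempty : pol (↑b) ∩ (A ∩ pol (u (n + 1))) ∩
        ⋂ x : u n, {f : EE F | ‖f (x : F)‖ ≤ 1} = ∅ := by
      rw [eq_empty_iff_forall_notMem]
      rintro f ⟨⟨hfb, hfA, -⟩, hfi⟩
      rw [mem_iInter] at hfi
      have hfn : f ∈ pol (u n) := fun x hx => hfi ⟨x, hx⟩
      exact eq_empty_iff_forall_notMem.1 hb f ⟨hfb, hfA, hfn⟩
    obtain ⟨t, ht⟩ := hs.elim_finite_subfamily_closed
      (fun x : u n => {f : EE F | ‖f (x : F)‖ ≤ 1})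
      (fun x => isClosed_le (continuous_norm.comp (continuous_ev (x : F))) continuous_const) hempty
    · refine ⟨b ∪ t.image Subtype.val, Finset.subset_union_left, ?_, ?_⟩
      · intro x hx
        rcases Finset.mem_union.1 hx with h | h
        · exact Or.inl h
        · obtain ⟨y, -, rfl⟩ := Finset.mem_image.1 h
          exact Or.inr y.2
      · rw [eq_empty_iff_forall_notMem] at ht ⊢
        intro f hf
        refine ht f ⟨⟨?_, hf.2⟩, ?_⟩
        · exact fun x hx => hf.1 x (by
            simp only [Finset.coe_union, mem_union]
            exact Or.inl hx)
        · simp only [mem_iInter, mem_setOf_eq]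
          intro x hx
          refine hf.1 (x : F) ?_
          simp only [Finset.coe_union, mem_union, Finset.coe_image, mem_image]
          exact Or.inr ⟨x, hx, rfl⟩
  obtain ⟨b0, hb0⟩ := base
  -- the recursively constructed finite sets
  let Bs : ∀ n : ℕ, {b : Finset F // pol ↑b ∩ (A ∩ pol (u n)) = ∅} := fun n =>
    Nat.rec (motive := fun n => {b : Finset F // pol ↑b ∩ (A ∩ pol (u n)) = ∅})
      ⟨b0, hb0⟩ (fun n p => ⟨(key n p.1 p.2).choose,
      (key n p.1 p.2).choose_spec.2.2⟩) n
  have hmono : ∀ n, (Bs n).1 ⊆ (Bs (n + 1)).1 := fun n => (key n (Bs n).1 (Bs n).2).choose_spec.1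
  have hnew : ∀ n, ∀ x ∈ (Bs (n + 1)).1, x ∈ (Bs n).1 ∨ x ∈ u n :=
    fun n => (key n (Bs n).1 (Bs n).2).choose_spec.2.1
  have hmono' : ∀ {m n : ℕ}, m ≤ n → (Bs m).1 ⊆ (Bs n).1 := by
    intro m n h
    induction h with
    | refl => exact Finset.Subset.refl _
    | step h ih => exact ih.trans (hmono _)
  set S : Set F := insert (0 : F) (⋃ n, ((Bs n).1 : Set F)) with hS_def
  have hBS : ∀ n, ((Bs n).1 : Set F) ⊆ S :=
    fun n => (subset_iUnion (fun n => ((Bs n).1 : Set F)) n).trans (subset_insert _ _)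
  have hSc : IsCompact S := by
    rw [isCompact_iff_ultrafilter_le_nhds]
    intro ℱ hℱ
    rw [le_principal_iff] at hℱ
    by_cases hc : ∃ n, ((Bs n).1 : Set F) ∈ ℱ
    · obtain ⟨n, hn⟩ := hc
      obtain ⟨x, hx, hpure⟩ := Ultrafilter.eq_pure_of_finite_mem (Bs n).1.finite_toSet hn
      exact ⟨x, hBS n hx, by rw [hpure]; exact pure_le_nhds x⟩
    · push_neg at hc
      refine ⟨0, mem_insert _ _, fun V hV => ?_⟩
      obtain ⟨n, -, hn⟩ := hu.1.mem_iff.mp hV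
      have hBn : ∀ m, ∀ x ∈ (Bs m).1, x ∈ (Bs n).1 ∨ x ∈ u n := by
        intro m
        induction m with
        | zero => exact fun x hx => Or.inl (hmono' (Nat.zero_le n) hx)
        | succ m ih =>
          rcases le_or_gt (m + 1) n with h | h
          · exact fun x hx => Or.inl (hmono' h hx)
          · intro x hx
            rcases hnew m x hx with h' | h'
            · exact ih x h'
            · exact Or.inr (hu.antitone (Nat.lt_succ_iff.mp h) h')
      have hsub : S ∩ (((Bs n).1 : Set F))ᶜ ⊆ V := by
        rintro x ⟨hxS, hxB⟩
        rcases hxS with rfl | hxU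
        · exact mem_of_mem_nhds hV
        · obtain ⟨m, hm⟩ := mem_iUnion.1 hxU
          rcases hBn m x hm with h | h
          · exact absurd h hxB
          · exact hn h
      exact mem_of_superset (inter_mem hℱ (Ultrafilter.compl_mem_iff_notMem.2 (hc n))) hsub
  -- `pol S` is a neighborhood of `0` disjoint from `A`
  have hpolS : pol S ∈ 𝓝 (0 : EE F) := by
    have hne : ({K : Set F | IsCompact K}).Nonempty := ⟨∅, isCompact_empty⟩
    have hdir : DirectedOn (· ⊆ ·) {K : Set F | IsCompact K} :=
      fun K hK L hL => ⟨K ∪ L, hK.union hL, subset_union_left, subset_union_right⟩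
    have hb := UniformConvergenceCLM.hasBasis_nhds_zero (RingHom.id ℂ) ℂ
      {K : Set F | IsCompact K} hne hdir
    have hmem := hb.mem_of_mem (i := (S, closedBall 0 1))
      ⟨hSc, closedBall_mem_nhds 0 one_pos⟩
    exact mem_of_superset hmem fun f hf x hx => mem_closedBall_zero_iff.1 (hf x hx)
  refine mem_of_superset hpolS fun f hf hfA => ?_
  obtain ⟨n, hfn⟩ := exists_mem_pol f hu
  exact eq_empty_iff_forall_notMem.1 (Bs n).2 f
    ⟨fun x hx => hf x (hBS n hx), hfA, hfn⟩

end BD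

/-- Let `F` be a Fréchet space over `ℂ` and `E = F'_c` its topological dual endowed with
the topology of uniform convergence on the compact subsets of `F`. Then `E` is a
k-space: a subset `A ⊆ E` is closed if and only if `A ∩ K` is closed in `K` for every
compact `K ⊆ E`. -/
theorem stmt12 {F : Type*} [AddCommGroup F] [Module ℂ F] [UniformSpace F] [IsUniformAddGroup F]
    [ContinuousSMul ℂ F] [CompleteSpace F] [TopologicalSpace.MetrizableSpace F]
    [Module ℝ F] [IsScalarTower ℝ ℂ F] [LocallyConvexSpace ℝ F]
    (A : Set (UniformConvergenceCLM (RingHom.id ℂ) ℂ {K : Set F | IsCompact K})) :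
    IsClosed A ↔
      ∀ K : Set (UniformConvergenceCLM (RingHom.id ℂ) ℂ {K : Set F | IsCompact K}),
        IsCompact K → IsClosed ((Subtype.val ⁻¹' A) : Set K) := by
  classical
  constructor
  · intro hA K _
    exact hA.preimage continuous_subtype_val
  · intro h
    have hcpt : ∀ K : Set (UniformConvergenceCLM (RingHom.id ℂ) ℂ {K : Set F | IsCompact K}),
        IsCompact K → IsCompact (A ∩ K) := by
      intro K hK
      haveI := isCompact_iff_compactSpace.mp hK
      have h1 : IsCompact (Subtype.val ⁻¹' A : Set K) := (h K hK).isCompact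
      have h2 := h1.image continuous_subtype_val
      rwa [Subtype.image_preimage_coe, inter_comm] at h2
    rw [← isOpen_compl_iff, isOpen_iff_mem_nhds]
    intro f₀ hf₀
    set τ := Homeomorph.subRight (G := BD.EE F) f₀ with hτ
    set A' : Set (BD.EE F) := τ '' A with hA'
    have h0' : (0 : BD.EE F) ∉ A' := by
      rintro ⟨g, hg, hg0⟩
      have : g = f₀ := by
        have := sub_eq_zero.mp hg0
        simpa using this
      exact hf₀ (this ▸ hg)
    have hA'cpt : ∀ K : Set (BD.EE F), IsCompact K → IsCompact (A' ∩ K) := by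
      intro K hK
      have hpre : IsCompact (τ ⁻¹' K) := τ.isCompact_preimage.2 hK
      have := (hcpt _ hpre).image τ.continuous
      rwa [Set.image_inter_preimage] at this
    have hA'c : A'ᶜ ∈ 𝓝 (0 : BD.EE F) := BD.zero_case A' h0' hA'cpt
    have hτ0 : τ f₀ = 0 := by simp [hτ]
    have hpre := τ.continuous.continuousAt.preimage_mem_nhds (hτ0 ▸ hA'c)
    have : τ ⁻¹' A'ᶜ = Aᶜ := by
      rw [Set.preimage_compl, hA', Set.preimage_image_eq A τ.injective]
    rwa [this] at hpre
end
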